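/- For the perturbation of identity φ_ε = id + εV with V ∈ C¹ compactly supported, and a fixed C¹ function p, the transport (Reynolds) formula holds: d⁺/dε|_{ε=0} ∫_{φ_ε(Ω)} p(ε, y) dy = ∫_Ω (D_m p + p(0,·) div V) dx, where D_m p(x) = d⁺/dε|_{ε=0} p(ε, φ_ε(x)), assuming p is C¹ jointly in (ε, x). -/

import Mathlib

open Set MeasureTheory
open scoped Topology

section DetAux

variable {n : ℕ}

/-- The determinant as a continuous multilinear map in the rows. -/
noncomputable def detCMM (n : ℕ) :
    ContinuousMultilinearMap ℝ (fun _ : Fin n => (Fin n → ℝ)) ℝ :=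
  (Matrix.detRowAlternating : (Fin n → ℝ) [⋀^Fin n]→ₗ[ℝ] ℝ).toMultilinearMap.mkContinuous
    (n.factorial) (by
      intro m
      have h : (Matrix.detRowAlternating : (Fin n → ℝ) [⋀^Fin n]→ₗ[ℝ] ℝ).toMultilinearMap m
          = Matrix.det (Matrix.of m) := rfl
      rw [h, Matrix.det_apply]
      calc ‖∑ σ : Equiv.Perm (Fin n), Equiv.Perm.sign σ • ∏ i, Matrix.of m (σ i) i‖
          ≤ ∑ σ : Equiv.Perm (Fin n), ‖Equiv.Perm.sign σ • ∏ i, Matrix.of m (σ i) i‖ :=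
            norm_sum_le _ _
        _ ≤ ∑ _σ : Equiv.Perm (Fin n), ∏ i, ‖m i‖ := by
            apply Finset.sum_le_sum
            intro σ _
            have hε : ‖Equiv.Perm.sign σ • ∏ i, Matrix.of m (σ i) i‖
                = ‖∏ i, Matrix.of m (σ i) i‖ := by
              rcases Int.units_eq_one_or (Equiv.Perm.sign σ) with h1 | h1 <;>
                simp [h1, Units.smul_def]
            rw [hε]
            calc ‖∏ i, Matrix.of m (σ i) i‖ ≤ ∏ i, ‖m (σ i)‖ := by
                  rw [norm_prod]
                  apply Finset.prod_le_prod (fun _ _ => norm_nonneg _)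
                  intro i _
                  exact norm_le_pi_norm (m (σ i)) i
              _ = ∏ i, ‖m i‖ := Equiv.prod_comp σ (fun i => ‖m i‖)
        _ = (n.factorial : ℝ) * ∏ i, ‖m i‖ := by
            rw [Finset.sum_const, Finset.card_univ, Fintype.card_perm, Fintype.card_fin,
              nsmul_eq_mul])

lemma detCMM_apply (m : Fin n → (Fin n → ℝ)) : detCMM n m = Matrix.det (Matrix.of m) := rfl

lemma detCMM_norm_le : ‖detCMM n‖ ≤ (n.factorial : ℝ) :=
  MultilinearMap.mkContinuous_norm_le _ (by positivity) _

end DetAux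
section DetAux2

variable {n : ℕ}

lemma row_norm_le {N : Matrix (Fin n) (Fin n) ℝ} {K : ℝ} (hK : 0 ≤ K)
    (hN : ∀ i j, |N i j| ≤ K) {ε : ℝ} (hε : |ε| ≤ 1) :
    ‖fun i => (1 + ε • N) i‖ ≤ 1 + K := by
  apply pi_norm_le_iff_of_nonneg (by linarith) |>.2
  intro i
  apply pi_norm_le_iff_of_nonneg (by linarith) |>.2
  intro j
  have h1 : |(1 : Matrix (Fin n) (Fin n) ℝ) i j| ≤ 1 := by
    rw [Matrix.one_apply]
    split <;> simp
  have h2 : |ε * N i j| ≤ K := by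
    rw [abs_mul]
    calc |ε| * |N i j| ≤ 1 * K := by
          apply mul_le_mul hε (hN i j) (abs_nonneg _) zero_le_one
      _ = K := one_mul K
  calc ‖((1 + ε • N) i) j‖ = |(1 : Matrix (Fin n) (Fin n) ℝ) i j + ε * N i j| := rfl
    _ ≤ |(1 : Matrix (Fin n) (Fin n) ℝ) i j| + |ε * N i j| := abs_add_le _ _
    _ ≤ 1 + K := add_le_add h1 h2

lemma det_one_add_smul_lipschitz {N : Matrix (Fin n) (Fin n) ℝ} {K : ℝ} (hK : 0 ≤ K)
    (hN : ∀ i j, |N i j| ≤ K) {ε₁ ε₂ : ℝ} (hε₁ : |ε₁| ≤ 1) (hε₂ : |ε₂| ≤ 1) :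
    |Matrix.det (1 + ε₁ • N) - Matrix.det (1 + ε₂ • N)| ≤
      ((n.factorial : ℝ) * n * (1 + K) ^ (n - 1) * K) * |ε₁ - ε₂| := by
  set m₁ : Fin n → (Fin n → ℝ) := fun i => (1 + ε₁ • N) i with hm₁
  set m₂ : Fin n → (Fin n → ℝ) := fun i => (1 + ε₂ • N) i with hm₂
  have e₁ : Matrix.det (1 + ε₁ • N) = detCMM n m₁ := rfl
  have e₂ : Matrix.det (1 + ε₂ • N) = detCMM n m₂ := rfl
  rw [e₁, e₂]
  have hsub : ‖m₁ - m₂‖ ≤ K * |ε₁ - ε₂| := by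
    apply pi_norm_le_iff_of_nonneg (by positivity) |>.2
    intro i
    apply pi_norm_le_iff_of_nonneg (by positivity) |>.2
    intro j
    have : (m₁ - m₂) i j = (ε₁ - ε₂) * N i j := by
      simp [hm₁, hm₂, Matrix.add_apply, Matrix.smul_apply]
      ring
    rw [Real.norm_eq_abs, this, abs_mul, mul_comm]
    exact mul_le_mul (hN i j) le_rfl (abs_nonneg _) hK
  have hmax : max ‖m₁‖ ‖m₂‖ ≤ 1 + K :=
    max_le (row_norm_le hK hN hε₁) (row_norm_le hK hN hε₂)
  calc ‖detCMM n m₁ - detCMM n m₂‖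
      ≤ ‖detCMM n‖ * (Fintype.card (Fin n)) * max ‖m₁‖ ‖m₂‖ ^ (Fintype.card (Fin n) - 1)
          * ‖m₁ - m₂‖ := (detCMM n).norm_image_sub_le m₁ m₂
    _ ≤ (n.factorial : ℝ) * n * (1 + K) ^ (n - 1) * (K * |ε₁ - ε₂|) := by
        simp only [Fintype.card_fin]
        have h1 : (0:ℝ) ≤ max ‖m₁‖ ‖m₂‖ := le_max_of_le_left (norm_nonneg _)
        have hpow : max ‖m₁‖ ‖m₂‖ ^ (n-1) ≤ (1 + K) ^ (n - 1) := pow_le_pow_left₀ h1 hmax _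
        apply mul_le_mul _ hsub (norm_nonneg _) (by positivity)
        apply mul_le_mul _ hpow (by positivity) (by positivity)
        apply mul_le_mul detCMM_norm_le le_rfl (by positivity) (by positivity)
    _ = ((n.factorial : ℝ) * n * (1 + K) ^ (n - 1) * K) * |ε₁ - ε₂| := by ring

lemma hasDerivAt_det_one_add_smul (N : Matrix (Fin n) (Fin n) ℝ) :
    HasDerivAt (fun ε : ℝ => Matrix.det (1 + ε • N)) (Matrix.trace N) 0 := by
  set Q : Polynomial ℝ :=
    (Matrix.det (1 + (Polynomial.X : Polynomial ℝ) • N.map Polynomial.C)).divX.divX with hQ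
  have hfun : (fun ε : ℝ => Matrix.det (1 + ε • N))
      = fun ε => 1 + Matrix.trace N * ε + Polynomial.eval ε Q * ε ^ 2 :=
    funext fun ε => Matrix.det_one_add_smul ε N
  rw [hfun]
  have h1 : HasDerivAt (fun ε : ℝ => 1 + Matrix.trace N * ε)
      (Matrix.trace N) 0 := by
    exact ((hasDerivAt_const (0:ℝ) (1:ℝ)).add ((hasDerivAt_id (0:ℝ)).const_mul (Matrix.trace N))).congr_deriv (by simp)
  have h2 : HasDerivAt (fun ε : ℝ => Polynomial.eval ε Q * ε ^ 2) 0 0 := by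
    exact ((Polynomial.hasDerivAt Q 0).mul (hasDerivAt_pow 2 (0:ℝ))).congr_deriv (by simp)
  exact (h1.add h2).congr_deriv (by simp)

end DetAux2
section Bridge

variable {n : ℕ}

local notation "E" => EuclideanSpace ℝ (Fin n)

lemma euclidean_coord_abs_le (v : E) (i : Fin n) : |v i| ≤ ‖v‖ := by
  rw [EuclideanSpace.norm_eq, ← Real.sqrt_sq_eq_abs]
  apply Real.sqrt_le_sqrt
  have : |v i| ^ 2 ≤ ∑ j, ‖v j‖ ^ 2 := by
    have := Finset.single_le_sum (f := fun j => ‖v j‖ ^ 2)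
      (fun j _ => by positivity) (Finset.mem_univ i)
    simpa [sq_abs] using this
  simpa [sq_abs] using this

noncomputable def clmMatrix (B : E →L[ℝ] E) : Matrix (Fin n) (Fin n) ℝ :=
  LinearMap.toMatrix (PiLp.basisFun 2 ℝ (Fin n)) (PiLp.basisFun 2 ℝ (Fin n)) ↑B

lemma clmMatrix_entry_le (B : E →L[ℝ] E) (i j : Fin n) : |clmMatrix B i j| ≤ ‖B‖ := by
  have h : clmMatrix B i j = (B ((PiLp.basisFun 2 ℝ (Fin n)) j)) i := by
    simp [clmMatrix, LinearMap.toMatrix_apply, PiLp.basisFun_repr]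
  rw [h]
  calc |(B ((PiLp.basisFun 2 ℝ (Fin n)) j)) i| ≤ ‖B ((PiLp.basisFun 2 ℝ (Fin n)) j)‖ :=
        euclidean_coord_abs_le _ i
    _ ≤ ‖B‖ * ‖(PiLp.basisFun 2 ℝ (Fin n)) j‖ := B.le_opNorm _
    _ ≤ ‖B‖ := by
        rw [PiLp.basisFun_apply]
        have : ‖(PiLp.single 2 j (1:ℝ) : E)‖ = 1 := by
          rw [show (PiLp.single 2 j (1:ℝ) : E)
              = EuclideanSpace.single j (1:ℝ) from rfl, EuclideanSpace.norm_single]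
          norm_num
        rw [this, mul_one]

lemma clm_det_eq (B : E →L[ℝ] E) (ε : ℝ) :
    (ContinuousLinearMap.id ℝ E + ε • B).det = Matrix.det (1 + ε • clmMatrix B) := by
  rw [ContinuousLinearMap.det]
  rw [← LinearMap.det_toMatrix (PiLp.basisFun 2 ℝ (Fin n))]
  congr 1
  have : ((ContinuousLinearMap.id ℝ E + ε • B : E →L[ℝ] E) : E →ₗ[ℝ] E)
      = LinearMap.id + ε • (B : E →ₗ[ℝ] E) := by
    ext v
    simp
  rw [this]
  simp only [map_add, _root_.map_smul, clmMatrix]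
  congr 1
  exact LinearMap.toMatrix_id _

lemma clm_trace_eq (B : E →L[ℝ] E) :
    LinearMap.trace ℝ E (B : E →ₗ[ℝ] E) = Matrix.trace (clmMatrix B) :=
  LinearMap.trace_eq_matrix_trace ℝ _ _

end Bridge
set_option maxHeartbeats 2000000 in
/-- Reynolds transport formula for the perturbation of identity `φ_ε = id + εV`:
for `p` jointly `C¹` in `(ε, x)`, the one-sided limit as `ε → 0⁺` of
`(∫_{φ_ε(Ω)} p(ε, y) dy − ∫_Ω p(0, x) dx)/ε` equals
`∫_Ω (D_m p + p(0,·) div V) dx`, where `D_m p(x)` is the right derivative at `ε = 0`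
of `ε ↦ p(ε, x + εV(x))`. -/
theorem reynolds_transport_formula {n : ℕ}
    (Ω : Set (EuclideanSpace ℝ (Fin n))) (hΩm : MeasurableSet Ω)
    (hΩb : Bornology.IsBounded Ω)
    (V : EuclideanSpace ℝ (Fin n) → EuclideanSpace ℝ (Fin n))
    (hV : ContDiff ℝ 1 V) (hVc : HasCompactSupport V)
    (p : ℝ → EuclideanSpace ℝ (Fin n) → ℝ)
    (hp : ContDiff ℝ 1 (fun z : ℝ × EuclideanSpace ℝ (Fin n) => p z.1 z.2)) :
    Filter.Tendsto
      (fun ε : ℝ =>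
        ((∫ y in (fun x => x + ε • V x) '' Ω, p ε y) - ∫ y in Ω, p 0 y) / ε)
      (𝓝[>] 0)
      (𝓝 (∫ x in Ω,
        (derivWithin (fun ε : ℝ => p ε (x + ε • V x)) (Ici 0) 0
          + p 0 x * LinearMap.trace ℝ (EuclideanSpace ℝ (Fin n))
              ((fderiv ℝ V x) : EuclideanSpace ℝ (Fin n) →ₗ[ℝ] EuclideanSpace ℝ (Fin n))))) := by
  classical
  have hVd : Differentiable ℝ V := hV.differentiable one_ne_zero
  set A : EuclideanSpace ℝ (Fin n) → (EuclideanSpace ℝ (Fin n) →L[ℝ] EuclideanSpace ℝ (Fin n)) :=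
    fderiv ℝ V with hA
  have hAcont : Continuous A := hV.continuous_fderiv one_ne_zero
  have hAsupp : HasCompactSupport A := hVc.fderiv (𝕜 := ℝ)
  obtain ⟨K₀, hK₀⟩ := hAsupp.exists_bound_of_continuous hAcont
  obtain ⟨K₁, hK₁⟩ := hVc.exists_bound_of_continuous hV.continuous
  set K : ℝ := max 1 (max K₀ K₁) with hK
  have hK1 : (1:ℝ) ≤ K := le_max_left _ _
  have hK0 : (0:ℝ) ≤ K := by linarith
  have hKA : ∀ x, ‖A x‖ ≤ K := fun x => (hK₀ x).trans ((le_max_left _ _).trans (le_max_right _ _))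
  have hKV : ∀ x, ‖V x‖ ≤ K := fun x => (hK₁ x).trans ((le_max_right _ _).trans (le_max_right _ _))
  set M : EuclideanSpace ℝ (Fin n) → Matrix (Fin n) (Fin n) ℝ := fun x => clmMatrix (A x) with hM
  have hMent : ∀ x i j, |M x i j| ≤ K := fun x i j => (clmMatrix_entry_le _ i j).trans (hKA x)
  set Ld : ℝ := (n.factorial : ℝ) * n * (1 + K) ^ (n - 1) * K with hLd
  have hLd0 : 0 ≤ Ld := by positivity
  -- uniform Lipschitz bound for the determinant factor
  have hdlip : ∀ x, ∀ ε₁ ε₂ : ℝ, |ε₁| ≤ 1 → |ε₂| ≤ 1 →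
      |Matrix.det (1 + ε₁ • M x) - Matrix.det (1 + ε₂ • M x)| ≤ Ld * |ε₁ - ε₂| :=
    fun x ε₁ ε₂ h1 h2 => det_one_add_smul_lipschitz hK0 (hMent x) h1 h2
  set ε₀ : ℝ := min (1 / (2 * K)) (1 / (2 * (Ld + 1))) with hε₀
  have hε₀pos : 0 < ε₀ := by
    apply lt_min <;> positivity
  have hε₀le : ε₀ ≤ 1 / 2 := by
    calc ε₀ ≤ 1 / (2 * K) := min_le_left _ _
      _ ≤ 1 / 2 := by
        apply div_le_div_of_nonneg_left one_pos.le (by linarith) (by linarith)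
  have hdet_near_one : ∀ (ε : ℝ), |ε| ≤ ε₀ → ∀ x,
      |Matrix.det (1 + ε • M x) - 1| ≤ 1 / 2 := by
    intro ε hε x
    have h1 : |ε| ≤ 1 := hε.trans (hε₀le.trans (by norm_num))
    have := hdlip x ε 0 h1 (by norm_num)
    simp only [zero_smul, add_zero, Matrix.det_one, sub_zero] at this
    calc |Matrix.det (1 + ε • M x) - 1| ≤ Ld * |ε| := this
      _ ≤ Ld * ε₀ := by
          apply mul_le_mul_of_nonneg_left hε hLd0
      _ ≤ Ld * (1 / (2 * (Ld + 1))) := by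
          apply mul_le_mul_of_nonneg_left (min_le_right _ _) hLd0
      _ ≤ 1 / 2 := by
          have h2 : (0:ℝ) < 2 * (Ld + 1) := by positivity
          rw [mul_one_div, div_le_div_iff₀ h2 two_pos]
          nlinarith
  have hdetpos : ∀ (ε : ℝ), |ε| ≤ ε₀ → ∀ x, (0:ℝ) < Matrix.det (1 + ε • M x) := by
    intro ε hε x
    have := abs_le.1 (hdet_near_one ε hε x)
    linarith [this.1]
  -- Lipschitz bound for V
  have hVlip : ∀ x y : EuclideanSpace ℝ (Fin n), ‖V x - V y‖ ≤ K * ‖x - y‖ := by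
    intro x y
    exact (convex_univ (𝕜 := ℝ)).norm_image_sub_le_of_norm_fderiv_le
      (fun z _ => hVd z) (fun z _ => hKA z) trivial trivial
  -- injectivity of the perturbation of the identity
  have hinj : ∀ (ε : ℝ), |ε| ≤ ε₀ → Function.Injective (fun x => x + ε • V x) := by
    intro ε hε x y hxy
    simp only at hxy
    have h1 : x - y = ε • (V y - V x) := by
      rw [smul_sub]
      exact sub_eq_sub_iff_add_eq_add.2 (hxy.trans (add_comm _ _))
    have h2 : ‖x - y‖ ≤ (1/2) * ‖x - y‖ := by
      calc ‖x - y‖ = ‖ε • (V y - V x)‖ := by rw [h1]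
        _ = |ε| * ‖V y - V x‖ := by rw [norm_smul, Real.norm_eq_abs]
        _ ≤ |ε| * (K * ‖y - x‖) := by
            apply mul_le_mul_of_nonneg_left (hVlip y x) (abs_nonneg _)
        _ = (|ε| * K) * ‖x - y‖ := by rw [norm_sub_rev]; ring
        _ ≤ (1/2) * ‖x - y‖ := by
            apply mul_le_mul_of_nonneg_right _ (norm_nonneg _)
            calc |ε| * K ≤ (1 / (2 * K)) * K :=
                mul_le_mul_of_nonneg_right (hε.trans (min_le_left _ _)) hK0
              _ = 1 / 2 := by
                  have hKne : K ≠ 0 := by linarith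
                  field_simp
    have h3 : ‖x - y‖ ≤ 0 := by linarith
    have h4 : x - y = 0 := by
      have := norm_le_zero_iff.1 h3
      exact this
    exact sub_eq_zero.1 h4
  -- the integrand after change of variables
  set F : ℝ → EuclideanSpace ℝ (Fin n) → ℝ :=
    fun ε x => Matrix.det (1 + ε • M x) * p ε (x + ε • V x) with hFdef
  -- change of variables
  have hCoV : ∀ ε : ℝ, 0 < ε → ε ≤ ε₀ →
      (∫ y in (fun x => x + ε • V x) '' Ω, p ε y) = ∫ x in Ω, F ε x := by
    intro ε hε1 hε2
    have hεabs : |ε| ≤ ε₀ := by rw [abs_of_pos hε1]; exact hε2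
    have hf' : ∀ x ∈ Ω, HasFDerivWithinAt (fun x => x + ε • V x)
        (ContinuousLinearMap.id ℝ (EuclideanSpace ℝ (Fin n)) + ε • A x) Ω x := by
      intro x _
      exact ((hasFDerivAt_id x).add (((hVd x).hasFDerivAt).const_smul ε)).hasFDerivWithinAt
    rw [integral_image_eq_integral_abs_det_fderiv_smul volume hΩm hf' ((hinj ε hεabs).injOn) (p ε)]
    apply setIntegral_congr_fun hΩm
    intro x _
    show |(ContinuousLinearMap.id ℝ (EuclideanSpace ℝ (Fin n)) + ε • A x).det|
        • p ε (x + ε • V x) = F ε x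
    rw [clm_det_eq (A x) ε, abs_of_pos (hdetpos ε hεabs x), smul_eq_mul]
  -- derivative of the integrand in ε at 0
  set ptilde : ℝ × EuclideanSpace ℝ (Fin n) → ℝ := fun z => p z.1 z.2 with hpt
  have hptd : Differentiable ℝ ptilde := hp.differentiable one_ne_zero
  set Dm : EuclideanSpace ℝ (Fin n) → ℝ := fun x => fderiv ℝ ptilde (0, x) (1, V x) with hDm
  set F' : EuclideanSpace ℝ (Fin n) → ℝ :=
    fun x => Matrix.trace (M x) * p 0 x + Dm x with hF'
  have hγ : ∀ x, HasDerivAt (fun ε : ℝ => ((ε, x + ε • V x) : ℝ × EuclideanSpace ℝ (Fin n)))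
      ((1 : ℝ), V x) 0 := by
    intro x
    have h2 : HasDerivAt (fun ε : ℝ => x + ε • V x) (V x) 0 := by
      simpa using ((hasDerivAt_id (0:ℝ)).smul_const (V x)).const_add x
    exact (hasDerivAt_id (0:ℝ)).prodMk h2
  have hgderiv : ∀ x, HasDerivAt (fun ε : ℝ => p ε (x + ε • V x)) (Dm x) 0 := by
    intro x
    have h0 : ((0:ℝ), x + (0:ℝ) • V x) = ((0:ℝ), x) := by simp
    have hfd : HasFDerivAt ptilde (fderiv ℝ ptilde ((0:ℝ), x)) ((0:ℝ), x + (0:ℝ) • V x) := by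
      rw [h0]; exact (hptd ((0:ℝ), x)).hasFDerivAt
    exact hfd.comp_hasDerivAt 0 (hγ x)
  have hFderiv : ∀ x, HasDerivAt (fun ε : ℝ => F ε x) (F' x) 0 := by
    intro x
    have hd : HasDerivAt (fun ε : ℝ => Matrix.det (1 + ε • M x)) (Matrix.trace (M x)) 0 :=
      hasDerivAt_det_one_add_smul (M x)
    have h := hd.mul (hgderiv x)
    simp only [zero_smul, add_zero, Matrix.det_one, one_mul] at h
    exact h
  -- compact convex region and uniform constants
  obtain ⟨R₀, hR₀⟩ := hΩb.subset_closedBall 0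
  set R : ℝ := max R₀ 0 with hRdef
  have hR0 : 0 ≤ R := le_max_right _ _
  have hΩR : Ω ⊆ Metric.closedBall 0 R :=
    hR₀.trans (Metric.closedBall_subset_closedBall (le_max_left _ _))
  set W : Set (ℝ × EuclideanSpace ℝ (Fin n)) :=
    Metric.closedBall (0:ℝ) 1 ×ˢ Metric.closedBall (0:EuclideanSpace ℝ (Fin n)) (R + K)
    with hWdef
  have hWcomp : IsCompact W := (isCompact_closedBall _ _).prod (isCompact_closedBall _ _)
  have hWconv : Convex ℝ W := (convex_closedBall _ _).prod (convex_closedBall _ _)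
  obtain ⟨Lp₀, hLp₀⟩ :=
    hWcomp.exists_bound_of_continuousOn ((hp.continuous_fderiv one_ne_zero).continuousOn)
  obtain ⟨Mp₀, hMp₀⟩ := hWcomp.exists_bound_of_continuousOn (hp.continuous.continuousOn)
  set Lp : ℝ := max Lp₀ 0 with hLpdef
  set Mp : ℝ := max Mp₀ 0 with hMpdef
  have hLp0 : 0 ≤ Lp := le_max_right _ _
  have hMp0 : 0 ≤ Mp := le_max_right _ _
  have hLpb : ∀ z ∈ W, ‖fderiv ℝ ptilde z‖ ≤ Lp := fun z hz => (hLp₀ z hz).trans (le_max_left _ _)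
  have hMpb : ∀ z ∈ W, ‖ptilde z‖ ≤ Mp := fun z hz => (hMp₀ z hz).trans (le_max_left _ _)
  have hplip : LipschitzOnWith (Real.toNNReal Lp) ptilde W := by
    apply Convex.lipschitzOnWith_of_nnnorm_fderiv_le (fun z _ => hptd z) _ hWconv
    intro z hz
    rw [← NNReal.coe_le_coe, coe_nnnorm, Real.coe_toNNReal _ hLp0]
    exact hLpb z hz
  have hγW : ∀ x ∈ Ω, ∀ ε : ℝ, |ε| ≤ 1 →
      ((ε, x + ε • V x) : ℝ × EuclideanSpace ℝ (Fin n)) ∈ W := by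
    intro x hx ε hε
    constructor
    · simpa [Real.dist_eq] using hε
    · simp only [Metric.mem_closedBall, dist_zero_right]
      have h1 : ‖x‖ ≤ R := by
        simpa [Metric.mem_closedBall, dist_zero_right] using hΩR hx
      have h2 : ‖ε • V x‖ ≤ K := by
        rw [norm_smul, Real.norm_eq_abs]
        calc |ε| * ‖V x‖ ≤ 1 * K := mul_le_mul hε (hKV x) (norm_nonneg _) zero_le_one
          _ = K := one_mul K
      calc ‖x + ε • V x‖ ≤ ‖x‖ + ‖ε • V x‖ := norm_add_le _ _
        _ ≤ R + K := add_le_add h1 h2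
  -- uniform Lipschitz estimate for F in ε on a ball around 0
  set Ctot : ℝ := (1 + Ld) * (Lp * (1 + K)) + Mp * Ld with hCtotdef
  have hCtot0 : 0 ≤ Ctot := by positivity
  have hFlip : ∀ x ∈ Ω, LipschitzOnWith (Real.nnabs Ctot)
      (fun ε => F ε x) (Metric.ball (0:ℝ) ε₀) := by
    intro x hx
    apply LipschitzOnWith.of_dist_le_mul
    intro ε₁ hε₁ ε₂ hε₂
    have habs₁ : |ε₁| ≤ ε₀ := by
      simpa [Real.dist_eq] using (Metric.mem_ball.1 hε₁).le
    have habs₂ : |ε₂| ≤ ε₀ := by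
      simpa [Real.dist_eq] using (Metric.mem_ball.1 hε₂).le
    have h1 : |ε₁| ≤ 1 := habs₁.trans (hε₀le.trans (by norm_num))
    have h2 : |ε₂| ≤ 1 := habs₂.trans (hε₀le.trans (by norm_num))
    set d₁ := Matrix.det (1 + ε₁ • M x)
    set d₂ := Matrix.det (1 + ε₂ • M x)
    set g₁ := p ε₁ (x + ε₁ • V x)
    set g₂ := p ε₂ (x + ε₂ • V x)
    have hd₁ : |d₁| ≤ 1 + Ld := by
      have := hdlip x ε₁ 0 h1 (by norm_num)
      simp only [zero_smul, add_zero, Matrix.det_one, sub_zero] at this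
      have hb : |d₁ - 1| ≤ Ld := this.trans (by
        calc Ld * |ε₁| ≤ Ld * 1 := mul_le_mul_of_nonneg_left h1 hLd0
          _ = Ld := mul_one Ld)
      have := abs_le.1 hb
      rw [abs_le]
      constructor <;> linarith [this.1, this.2]
    have hg₂ : |g₂| ≤ Mp := hMpb _ (hγW x hx ε₂ h2)
    have hgg : |g₁ - g₂| ≤ Lp * ((1 + K) * |ε₁ - ε₂|) := by
      have hdist := hplip.dist_le_mul _ (hγW x hx ε₁ h1) _ (hγW x hx ε₂ h2)
      have hdist2 : dist ((ε₁, x + ε₁ • V x) : ℝ × EuclideanSpace ℝ (Fin n))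
          ((ε₂, x + ε₂ • V x) : ℝ × EuclideanSpace ℝ (Fin n)) ≤ (1 + K) * |ε₁ - ε₂| := by
        rw [Prod.dist_eq]
        apply max_le
        · rw [Real.dist_eq]
          nlinarith [abs_nonneg (ε₁ - ε₂)]
        · rw [dist_eq_norm]
          have : (x + ε₁ • V x) - (x + ε₂ • V x) = (ε₁ - ε₂) • V x := by
            rw [sub_smul]; abel
          rw [this, norm_smul, Real.norm_eq_abs]
          calc |ε₁ - ε₂| * ‖V x‖ ≤ |ε₁ - ε₂| * K :=
              mul_le_mul_of_nonneg_left (hKV x) (abs_nonneg _)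
            _ ≤ (1 + K) * |ε₁ - ε₂| := by nlinarith [abs_nonneg (ε₁ - ε₂)]
      calc |g₁ - g₂| = dist (ptilde (ε₁, x + ε₁ • V x)) (ptilde (ε₂, x + ε₂ • V x)) := by
            rw [Real.dist_eq]
        _ ≤ (Real.toNNReal Lp : ℝ) * dist ((ε₁, x + ε₁ • V x) : ℝ × EuclideanSpace ℝ (Fin n))
            ((ε₂, x + ε₂ • V x) : ℝ × EuclideanSpace ℝ (Fin n)) := hdist
        _ ≤ Lp * ((1 + K) * |ε₁ - ε₂|) := by
            rw [Real.coe_toNNReal _ hLp0]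
            exact mul_le_mul_of_nonneg_left hdist2 hLp0
    have hdd : |d₁ - d₂| ≤ Ld * |ε₁ - ε₂| := hdlip x ε₁ ε₂ h1 h2
    rw [Real.dist_eq, Real.dist_eq]
    have hsplit : d₁ * g₁ - d₂ * g₂ = d₁ * (g₁ - g₂) + (d₁ - d₂) * g₂ := by ring
    calc |d₁ * g₁ - d₂ * g₂| ≤ |d₁ * (g₁ - g₂)| + |(d₁ - d₂) * g₂| := by
          rw [hsplit]; exact abs_add_le _ _
      _ = |d₁| * |g₁ - g₂| + |d₁ - d₂| * |g₂| := by rw [abs_mul, abs_mul]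
      _ ≤ (1 + Ld) * (Lp * ((1 + K) * |ε₁ - ε₂|)) + (Ld * |ε₁ - ε₂|) * Mp := by
          apply add_le_add
          · apply mul_le_mul hd₁ hgg (abs_nonneg _) (by linarith)
          · apply mul_le_mul hdd hg₂ (abs_nonneg _) (by positivity)
      _ ≤ ↑(Real.nnabs Ctot) * |ε₁ - ε₂| := by
          rw [Real.coe_nnabs, abs_of_nonneg hCtot0, hCtotdef]
          nlinarith [abs_nonneg (ε₁ - ε₂)]
  -- measurability and integrability
  have hMcont : Continuous M := by
    apply continuous_matrix
    intro i j
    have heq : (fun x => M x i j)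
        = fun x => (EuclideanSpace.proj i) ((A x) ((PiLp.basisFun 2 ℝ (Fin n)) j)) := by
      funext x
      simp [hM, clmMatrix, LinearMap.toMatrix_apply, PiLp.basisFun_repr]
    rw [heq]
    exact (EuclideanSpace.proj i).continuous.comp (hAcont.clm_apply continuous_const)
  have hFcont : ∀ ε : ℝ, Continuous (fun x => F ε x) := by
    intro ε
    apply Continuous.mul
    · apply Continuous.matrix_det
      apply continuous_matrix
      intro i j
      simp only [Matrix.add_apply, Matrix.smul_apply, smul_eq_mul]
      exact continuous_const.add (continuous_const.mul (hMcont.matrix_elem i j))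
    · exact hp.continuous.comp (continuous_const.prodMk
        (continuous_id.add (hV.continuous.const_smul ε)))
  have hF_meas : ∀ᶠ ε in 𝓝 (0:ℝ), AEStronglyMeasurable (F ε) (volume.restrict Ω) :=
    Filter.Eventually.of_forall fun ε => (hFcont ε).aestronglyMeasurable
  have hF0 : (fun x => F 0 x) = fun x => p 0 x := by
    funext x
    simp [hFdef]
  have hcl : IsCompact (closure Ω) :=
    Metric.isCompact_of_isClosed_isBounded isClosed_closure hΩb.closure
  have hp0cont : Continuous (fun x : EuclideanSpace ℝ (Fin n) => p 0 x) :=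
    hp.continuous.comp (continuous_const.prodMk continuous_id)
  have hF_int : Integrable (F 0) (volume.restrict Ω) := by
    have : IntegrableOn (fun x => p 0 x) Ω volume :=
      (hp0cont.continuousOn.integrableOn_compact hcl).mono_set subset_closure
    have h2 : F 0 = fun x => p 0 x := hF0
    rw [h2]
    exact this
  have hF'cont : Continuous F' := by
    apply Continuous.add
    · exact (hMcont.matrix_trace).mul hp0cont
    · have h1 : Continuous fun x : EuclideanSpace ℝ (Fin n) => fderiv ℝ ptilde (0, x) :=
        (hp.continuous_fderiv one_ne_zero).comp (continuous_const.prodMk continuous_id)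
      exact h1.clm_apply (continuous_const.prodMk hV.continuous)
  have hF'_meas : AEStronglyMeasurable F' (volume.restrict Ω) := hF'cont.aestronglyMeasurable
  have hbound_int : Integrable (fun _ : EuclideanSpace ℝ (Fin n) => Ctot) (volume.restrict Ω) := by
    apply integrable_const_iff.2
    right
    exact isFiniteMeasure_restrict.2 hΩb.measure_lt_top.ne
  have hlip_ae : ∀ᵐ x ∂(volume.restrict Ω), LipschitzOnWith (Real.nnabs Ctot)
      (fun ε => F ε x) (Metric.ball (0:ℝ) ε₀) :=
    (ae_restrict_mem hΩm).mono fun x hx => hFlip x hx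
  have hdiff_ae : ∀ᵐ x ∂(volume.restrict Ω), HasDerivAt (fun ε => F ε x) (F' x) 0 :=
    Filter.Eventually.of_forall hFderiv
  obtain ⟨hF'int, hG⟩ := hasDerivAt_integral_of_dominated_loc_of_lip
    (F := F) (F' := F') (x₀ := (0:ℝ)) (bound := fun _ => Ctot)
    (Metric.ball_mem_nhds 0 hε₀pos) hF_meas hF_int hF'_meas hlip_ae hbound_int hdiff_ae
  -- identify the limit integrand
  have hint_eq : (∫ x in Ω, F' x) = ∫ x in Ω,
      (derivWithin (fun ε : ℝ => p ε (x + ε • V x)) (Ici 0) 0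
        + p 0 x * LinearMap.trace ℝ (EuclideanSpace ℝ (Fin n))
            ((fderiv ℝ V x) : EuclideanSpace ℝ (Fin n) →ₗ[ℝ] EuclideanSpace ℝ (Fin n))) := by
    apply setIntegral_congr_fun hΩm
    intro x _
    have h1 : derivWithin (fun ε : ℝ => p ε (x + ε • V x)) (Ici 0) 0 = Dm x :=
      ((hgderiv x).hasDerivWithinAt).derivWithin (uniqueDiffOn_Ici 0 0 Set.self_mem_Ici)
    have h2 : LinearMap.trace ℝ (EuclideanSpace ℝ (Fin n))
        ((fderiv ℝ V x) : EuclideanSpace ℝ (Fin n) →ₗ[ℝ] EuclideanSpace ℝ (Fin n))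
        = Matrix.trace (M x) := clm_trace_eq (A x)
    beta_reduce
    rw [h1, h2, hF']
    ring
  rw [← hint_eq]
  have hslope := hasDerivAt_iff_tendsto_slope.1 hG
  have hmono : 𝓝[>] (0:ℝ) ≤ 𝓝[≠] (0:ℝ) :=
    nhdsWithin_mono 0 fun y hy => ne_of_gt hy
  apply Filter.Tendsto.congr' _ (hslope.mono_left hmono)
  filter_upwards [Ioo_mem_nhdsGT_of_mem (Set.mem_Ico.2 ⟨le_refl (0:ℝ), hε₀pos⟩)] with ε hε
  rw [slope_def_field]
  rw [hCoV ε hε.1 hε.2.le]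
  have hG0 : (∫ x in Ω, F 0 x) = ∫ y in Ω, p 0 y := by
    apply setIntegral_congr_fun hΩm
    intro x _
    simp [hFdef]
  rw [← hG0]
  rw [sub_zero]
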